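/- Let {T(t)}_{t≥0} be a C₀-semigroup on a Hilbert space H and m a positive integer. If there exists t₁ > 0 such that T(t) is an m-isometry for every t ∈ [0, t₁], then T(t) is an m-isometry for every t ≥ 0. -/
import Mathlib


open Finset Function
open scoped fwdDiff

private lemma step_expand {G : Type*} [AddCommGroup G] (n : ℕ) (f : ℕ → G) (y : ℕ) :
    Δ_[n] f y = ∑ j ∈ range n, Δ_[1] f (y + j) := by
  have h := Finset.sum_range_sub (fun i => f (y + i)) n
  simp only [fwdDiff]
  simpa [← add_assoc] using h.symm

private lemma fwdDiff_shift {G : Type*} [AddCommGroup G] (h c : ℕ) (f : ℕ → G) (r : ℕ) (y : ℕ) :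
    (Δ_[h])^[r] (fun z => f (z + c)) y = (Δ_[h])^[r] f (y + c) := by
  induction r generalizing f y with
  | zero => simp
  | succ r IH =>
    rw [iterate_succ_apply, iterate_succ_apply]
    have hc : Δ_[h] (fun z => f (z + c)) = fun z => Δ_[h] f (z + c) := by
      funext z; simp [fwdDiff, add_right_comm]
    rw [hc, IH]

private lemma key_diff (m n : ℕ) (f : ℕ → ℝ) (hf : ∀ y, (Δ_[1])^[m] f y = 0) (y : ℕ) :
    (Δ_[n])^[m] f y = 0 := by
  induction m generalizing f y with
  | zero => exact hf y
  | succ r IH =>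
    rw [iterate_succ_apply]
    have hΔ : Δ_[n] f = ∑ j ∈ range n, (fun z => Δ_[1] f (z + j)) := by
      funext z
      rw [step_expand, Finset.sum_apply]
    rw [hΔ, fwdDiff_iter_finset_sum, Finset.sum_apply]
    refine Finset.sum_eq_zero (fun j _ => ?_)
    refine IH _ (fun y' => ?_) y
    rw [fwdDiff_shift, ← iterate_succ_apply]
    exact hf _

theorem stmt_4 {H : Type*} [NormedAddCommGroup H] [InnerProductSpace ℂ H] [CompleteSpace H]
    (T : ℝ → H →L[ℂ] H) (m : ℕ) (hm : 0 < m)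
    (hT0 : T 0 = 1)
    (hTsem : ∀ s t : ℝ, 0 ≤ s → 0 ≤ t → T (s + t) = T t ∘L T s)
    (hTcont : ∀ x : H, Filter.Tendsto (fun t => T t x) (nhdsWithin 0 (Set.Ioi 0)) (nhds x))
    (t₁ : ℝ) (ht₁ : 0 < t₁)
    (hiso : ∀ t ∈ Set.Icc (0 : ℝ) t₁, ∀ x : H, ∑ k ∈ range (m + 1),
      ((-1 : ℝ)) ^ (m - k) * (m.choose k) * ‖((T t) ^ k) x‖ ^ 2 = 0) :
    ∀ t : ℝ, 0 ≤ t → ∀ x : H, ∑ k ∈ range (m + 1),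
      ((-1 : ℝ)) ^ (m - k) * (m.choose k) * ‖((T t) ^ k) x‖ ^ 2 = 0 := by
  -- semigroup power law
  have hpow : ∀ (n : ℕ) (s : ℝ), 0 ≤ s → T ((n : ℝ) * s) = (T s) ^ n := by
    intro n s hs
    induction n with
    | zero => simpa using hT0
    | succ n IH =>
      have h1 : ((n + 1 : ℕ) : ℝ) * s = (n : ℝ) * s + s := by push_cast; ring
      rw [h1, hTsem _ s (by positivity) hs, IH, pow_succ']
      rfl
  intro t ht x
  rcases eq_or_lt_of_le ht with rfl | htpos
  · exact hiso 0 ⟨le_refl 0, le_of_lt ht₁⟩ x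
  -- choose n with t / n ∈ (0, t₁]
  set n : ℕ := ⌈t / t₁⌉₊ with hn
  have hn1 : 1 ≤ n := Nat.one_le_ceil_iff.mpr (by positivity)
  have hnpos : (0 : ℝ) < n := by exact_mod_cast hn1
  set s : ℝ := t / n with hs
  have hspos : 0 < s := div_pos htpos hnpos
  have hst : s ≤ t₁ := by
    rw [hs, div_le_iff₀ hnpos, mul_comm]
    have h2 := Nat.le_ceil (t / t₁)
    rw [div_le_iff₀ ht₁] at h2
    exact h2
  have hts : t = (n : ℝ) * s := by
    rw [hs]; field_simp
  have hT : T t = (T s) ^ n := by rw [hts]; exact hpow n s hspos.le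
  set S := T s with hS
  set f : ℕ → ℝ := fun j => ‖(S ^ j) x‖ ^ 2 with hf
  -- step-1 differences vanish
  have h1 : ∀ y : ℕ, (Δ_[1])^[m] f y = 0 := by
    intro y
    rw [fwdDiff_iter_eq_sum_shift]
    have hh := hiso s ⟨hspos.le, hst⟩ ((S ^ y) x)
    rw [← hS] at hh
    rw [← hh]
    refine Finset.sum_congr rfl (fun k hk => ?_)
    have : f (y + k • 1) = ‖((S ^ k)) ((S ^ y) x)‖ ^ 2 := by
      simp only [hf, smul_eq_mul, mul_one]
      rw [add_comm, pow_add]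
      rfl
    rw [this, zsmul_eq_mul]
    simp only [Int.cast_mul, Int.cast_pow, Int.cast_neg, Int.cast_one, Int.cast_natCast]
    try ring
  have h2 := key_diff m n f h1 0
  rw [fwdDiff_iter_eq_sum_shift] at h2
  rw [← h2]
  refine Finset.sum_congr rfl (fun k hk => ?_)
  have hfk : f (0 + k • n) = ‖((T t) ^ k) x‖ ^ 2 := by
    simp only [hf, zero_add, smul_eq_mul, hT, ← pow_mul, mul_comm k n]
  rw [hfk, zsmul_eq_mul]
  simp only [Int.cast_mul, Int.cast_pow, Int.cast_neg, Int.cast_one, Int.cast_natCast]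
  try ring
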